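/- The function H(d) = ∫_{arccosh(d)}^{∞} d/√(cosh²u − d²) du, defined for d > 1, is nonincreasing in d. -/

import Mathlib

open MeasureTheory Set Real

noncomputable def arccosh (x : ℝ) : ℝ := Real.log (x + Real.sqrt (x ^ 2 - 1))

noncomputable def H (d : ℝ) : ℝ :=
  ∫ u in Set.Ioi (arccosh d), d / Real.sqrt (Real.cosh u ^ 2 - d ^ 2)

noncomputable def G (d v : ℝ) : ℝ :=
  d / (Real.sqrt ((v + 1) ^ 2 - 1) * Real.sqrt (d ^ 2 * (v + 1) ^ 2 - 1))

lemma cosh_arccosh {d : ℝ} (hd : 1 ≤ d) : Real.cosh (arccosh d) = d := by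
  have hs : Real.sqrt (d ^ 2 - 1) ^ 2 = d ^ 2 - 1 := Real.sq_sqrt (by nlinarith)
  have hsn : 0 ≤ Real.sqrt (d ^ 2 - 1) := Real.sqrt_nonneg _
  have hy : (0:ℝ) < d + Real.sqrt (d ^ 2 - 1) := by nlinarith
  rw [arccosh, Real.cosh_eq, Real.exp_log hy, ← Real.log_inv, Real.exp_log (by positivity)]
  rw [div_eq_iff (two_ne_zero), eq_comm]
  have h1 : (d + Real.sqrt (d ^ 2 - 1))⁻¹ = d - Real.sqrt (d ^ 2 - 1) := by
    exact inv_eq_of_mul_eq_one_right (by nlinarith)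
  rw [h1]; ring

lemma arccosh_pos {d : ℝ} (hd : 1 < d) : 0 < arccosh d :=
  Real.log_pos (by have := Real.sqrt_nonneg (d ^ 2 - 1); linarith)

lemma image_lemma {d : ℝ} (hd : 1 < d) :
    (fun u => Real.cosh u / d - 1) '' Set.Ioi (arccosh d) = Set.Ioi (0:ℝ) := by
  have hd0 : (0:ℝ) < d := by linarith
  have hap := arccosh_pos hd
  ext v
  simp only [mem_image, mem_Ioi]
  constructor
  · rintro ⟨u, hu, rfl⟩
    have hcosh : d < Real.cosh u := by
      have : Real.cosh (arccosh d) < Real.cosh u := by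
        rw [Real.cosh_lt_cosh, abs_of_pos hap, abs_of_pos (hap.trans hu)]
        exact hu
      rwa [cosh_arccosh hd.le] at this
    have : 1 < Real.cosh u / d := (one_lt_div hd0).2 hcosh
    linarith
  · intro hv
    refine ⟨arccosh (d * (v + 1)), ?_, ?_⟩
    · -- arccosh strictly monotone here
      have h1 : 1 < d * (v + 1) := by nlinarith
      apply Real.log_lt_log (by have := Real.sqrt_nonneg (d ^ 2 - 1); linarith)
      have hsq : Real.sqrt (d ^ 2 - 1) ≤ Real.sqrt ((d * (v + 1)) ^ 2 - 1) :=
        Real.sqrt_le_sqrt (by nlinarith [sq_nonneg (d * v), mul_pos hd0 (mul_pos hd0 hv)])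
      nlinarith
    · rw [cosh_arccosh (by nlinarith)]
      field_simp
      ring

lemma key {d : ℝ} (hd : 1 < d) : H d = ∫ v in Set.Ioi (0:ℝ), G d v := by
  have hd0 : (0:ℝ) < d := by linarith
  have hap := arccosh_pos hd
  rw [← image_lemma hd,
    integral_image_eq_integral_abs_deriv_smul (f' := fun u => Real.sinh u / d)
      measurableSet_Ioi
      (fun u _ => (((Real.hasDerivAt_cosh u).div_const d).sub_const 1).hasDerivWithinAt)
      ?_ (G d)]
  · apply setIntegral_congr_fun measurableSet_Ioi
    intro u hu
    simp only [mem_Ioi] at hu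
    have hu0 : 0 < u := hap.trans hu
    have hsinh : 0 < Real.sinh u := by rwa [Real.sinh_pos_iff]
    have hcosh : d < Real.cosh u := by
      have : Real.cosh (arccosh d) < Real.cosh u := by
        rw [Real.cosh_lt_cosh, abs_of_pos hap, abs_of_pos hu0]; exact hu
      rwa [cosh_arccosh hd.le] at this
    have hc2 : 0 < Real.cosh u ^ 2 - d ^ 2 := by nlinarith
    have e1 : (Real.cosh u / d - 1 + 1) ^ 2 - 1
        = (Real.sqrt (Real.cosh u ^ 2 - d ^ 2) / d) ^ 2 := by
      rw [div_pow, Real.sq_sqrt hc2.le]; field_simp; ring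
    have e2 : d ^ 2 * (Real.cosh u / d - 1 + 1) ^ 2 - 1 = Real.sinh u ^ 2 := by
      have := Real.cosh_sq' (x := u); field_simp; nlinarith
    simp only [G, smul_eq_mul]
    rw [e1, e2, Real.sqrt_sq (by positivity), Real.sqrt_sq hsinh.le,
      abs_of_pos (by positivity : (0:ℝ) < Real.sinh u / d)]
    have hsq : 0 < Real.sqrt (Real.cosh u ^ 2 - d ^ 2) := Real.sqrt_pos.2 hc2
    field_simp
  · -- injectivity
    have : StrictMonoOn (fun u => Real.cosh u / d - 1) (Set.Ioi (arccosh d)) := by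
      intro a ha b hb hab
      simp only [mem_Ioi] at ha hb
      have ha0 : 0 < a := hap.trans ha
      have : Real.cosh a < Real.cosh b := by
        rw [Real.cosh_lt_cosh, abs_of_pos ha0, abs_of_pos (ha0.trans hab)]; exact hab
      dsimp only
      gcongr
    exact this.injOn

lemma G_nonneg {d : ℝ} (hd : 0 < d) (v : ℝ) : 0 ≤ G d v := by
  unfold G; positivity

lemma G_integrable {d : ℝ} (hd : 1 < d) : IntegrableOn (G d) (Set.Ioi (0:ℝ)) := by
  have hd0 : (0:ℝ) < d := by linarith
  have hcont : ContinuousOn (G d) (Set.Ioi (0:ℝ)) := by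
    apply ContinuousOn.div continuousOn_const
    · exact ((Real.continuous_sqrt.comp (by continuity)).mul
        (Real.continuous_sqrt.comp (by continuity))).continuousOn
    · intro v hv
      simp only [mem_Ioi] at hv
      have h1 : 0 < (v + 1) ^ 2 - 1 := by nlinarith
      have h2 : 0 < d ^ 2 * (v + 1) ^ 2 - 1 := by nlinarith
      positivity
  have hmeas : AEStronglyMeasurable (G d) (volume.restrict (Set.Ioi (0:ℝ))) :=
    hcont.aestronglyMeasurable measurableSet_Ioi
  have hsplit : Set.Ioc (0:ℝ) 1 ∪ Set.Ioi 1 = Set.Ioi 0 := Set.Ioc_union_Ioi_eq_Ioi zero_le_one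
  rw [← hsplit]
  apply IntegrableOn.union
  · -- near 0 : bound by C * v^(-1/2)
    set C := d / (Real.sqrt 2 * Real.sqrt (d ^ 2 - 1)) with hC
    have hrpow : IntegrableOn (fun v : ℝ => v ^ (-(1/2) : ℝ)) (Set.Ioc (0:ℝ) 1) :=
      (intervalIntegrable_iff_integrableOn_Ioc_of_le zero_le_one).mp
        (intervalIntegral.intervalIntegrable_rpow' (by norm_num))
    have hbase : IntegrableOn (fun v : ℝ => C * v ^ (-(1/2) : ℝ)) (Set.Ioc (0:ℝ) 1) :=
      hrpow.const_mul C
    apply hbase.mono' (hmeas.mono_measure (Measure.restrict_mono Ioc_subset_Ioi_self le_rfl))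
    rw [ae_restrict_iff' measurableSet_Ioc]
    apply ae_of_all
    intro v hv
    obtain ⟨hv0, hv1⟩ := hv
    rw [Real.norm_eq_abs, abs_of_nonneg (G_nonneg hd0 v)]
    have h1 : Real.sqrt (2 * v) ≤ Real.sqrt ((v + 1) ^ 2 - 1) :=
      Real.sqrt_le_sqrt (by nlinarith)
    have h2 : Real.sqrt (d ^ 2 - 1) ≤ Real.sqrt (d ^ 2 * (v + 1) ^ 2 - 1) :=
      Real.sqrt_le_sqrt (by nlinarith [sq_nonneg (d * v), mul_pos hd0 (mul_pos hd0 hv0)])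
    have hs2 : Real.sqrt (2 * v) = Real.sqrt 2 * Real.sqrt v := Real.sqrt_mul (by norm_num) v
    have hsv : 0 < Real.sqrt v := Real.sqrt_pos.2 hv0
    have hsd : 0 < Real.sqrt (d ^ 2 - 1) := Real.sqrt_pos.2 (by nlinarith)
    have hs2' : (0:ℝ) < Real.sqrt 2 := by positivity
    have hrw : v ^ (-(1/2) : ℝ) = 1 / Real.sqrt v := by
      rw [Real.rpow_neg hv0.le, Real.sqrt_eq_rpow]; norm_num
    rw [hrw, hC]
    have hG : G d v ≤ d / (Real.sqrt 2 * Real.sqrt v * Real.sqrt (d ^ 2 - 1)) := by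
      simp only [G]
      apply div_le_div_of_nonneg_left hd0.le (by positivity)
      calc Real.sqrt 2 * Real.sqrt v * Real.sqrt (d ^ 2 - 1)
          = Real.sqrt (2 * v) * Real.sqrt (d ^ 2 - 1) := by rw [hs2]
        _ ≤ Real.sqrt ((v + 1) ^ 2 - 1) * Real.sqrt (d ^ 2 * (v + 1) ^ 2 - 1) := by
            apply mul_le_mul h1 h2 hsd.le (Real.sqrt_nonneg _)
    calc G d v ≤ d / (Real.sqrt 2 * Real.sqrt v * Real.sqrt (d ^ 2 - 1)) := hG
      _ = d / (Real.sqrt 2 * Real.sqrt (d ^ 2 - 1)) * (1 / Real.sqrt v) := by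
          rw [div_mul_div_comm, mul_one]; ring_nf
  · -- at infinity : bound by v^(-2)
    have hbase : IntegrableOn (fun v : ℝ => v ^ (-2 : ℝ)) (Set.Ioi (1:ℝ)) :=
      integrableOn_Ioi_rpow_of_lt (by norm_num) one_pos
    apply hbase.mono' (hmeas.mono_measure (Measure.restrict_mono (Ioi_subset_Ioi zero_le_one) le_rfl))
    rw [ae_restrict_iff' measurableSet_Ioi]
    apply ae_of_all
    intro v hv
    simp only [mem_Ioi] at hv
    have hv0 : (0:ℝ) < v := by linarith
    rw [Real.norm_eq_abs, abs_of_nonneg (G_nonneg hd0 v)]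
    have h1 : Real.sqrt (v ^ 2) ≤ Real.sqrt ((v + 1) ^ 2 - 1) :=
      Real.sqrt_le_sqrt (by nlinarith)
    have h2 : Real.sqrt (d ^ 2 * v ^ 2) ≤ Real.sqrt (d ^ 2 * (v + 1) ^ 2 - 1) :=
      Real.sqrt_le_sqrt (by nlinarith)
    rw [Real.sqrt_sq hv0.le] at h1
    have hdv : Real.sqrt (d ^ 2 * v ^ 2) = d * v := by
      rw [show d ^ 2 * v ^ 2 = (d * v) ^ 2 by ring, Real.sqrt_sq (by positivity)]
    rw [hdv] at h2
    have hrw : v ^ (-2 : ℝ) = 1 / v ^ 2 := by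
      rw [Real.rpow_neg hv0.le, show (2:ℝ) = ((2:ℕ):ℝ) by norm_num, Real.rpow_natCast]
      norm_num
    have hApos : 0 < Real.sqrt ((v + 1) ^ 2 - 1) := Real.sqrt_pos.2 (by nlinarith)
    have hBpos : 0 < Real.sqrt (d ^ 2 * (v + 1) ^ 2 - 1) :=
      Real.sqrt_pos.2 (by nlinarith [sq_nonneg (d * v), mul_pos hd0 (mul_pos hd0 hv0)])
    rw [hrw]
    simp only [G]
    rw [div_le_div_iff₀ (by positivity) (by positivity)]
    have : d * (v * (d * v)) ≤ d * (Real.sqrt ((v + 1) ^ 2 - 1) *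
        Real.sqrt (d ^ 2 * (v + 1) ^ 2 - 1)) := by
      apply mul_le_mul_of_nonneg_left _ hd0.le
      exact mul_le_mul h1 h2 (by positivity) (Real.sqrt_nonneg _)
    nlinarith [this, hd0, hv0]

lemma G_mono {d₁ d₂ v : ℝ} (h1 : 1 < d₁) (h12 : d₁ ≤ d₂) (hv : 0 < v) :
    G d₂ v ≤ G d₁ v := by
  have hd1 : (0:ℝ) < d₁ := by linarith
  have hd2 : (0:ℝ) < d₂ := by linarith
  have hA : 0 < Real.sqrt ((v + 1) ^ 2 - 1) := Real.sqrt_pos.2 (by nlinarith)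
  have hq1 : (1:ℝ) < d₁ ^ 2 := by nlinarith
  have hq2 : (1:ℝ) ≤ (v + 1) ^ 2 := by nlinarith
  have hB1 : 0 < d₁ ^ 2 * (v + 1) ^ 2 - 1 := by nlinarith
  have hB2 : 0 < d₂ ^ 2 * (v + 1) ^ 2 - 1 := by nlinarith
  have hS1 : 0 < Real.sqrt (d₁ ^ 2 * (v + 1) ^ 2 - 1) := Real.sqrt_pos.2 hB1
  have hS2 : 0 < Real.sqrt (d₂ ^ 2 * (v + 1) ^ 2 - 1) := Real.sqrt_pos.2 hB2
  simp only [G]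
  rw [div_le_div_iff₀ (by positivity) (by positivity)]
  have hkey : d₂ * Real.sqrt (d₁ ^ 2 * (v + 1) ^ 2 - 1)
      ≤ d₁ * Real.sqrt (d₂ ^ 2 * (v + 1) ^ 2 - 1) := by
    rw [show d₂ * Real.sqrt (d₁ ^ 2 * (v + 1) ^ 2 - 1)
        = Real.sqrt (d₂ ^ 2 * (d₁ ^ 2 * (v + 1) ^ 2 - 1)) by
      rw [Real.sqrt_mul (sq_nonneg d₂), Real.sqrt_sq hd2.le],
      show d₁ * Real.sqrt (d₂ ^ 2 * (v + 1) ^ 2 - 1)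
        = Real.sqrt (d₁ ^ 2 * (d₂ ^ 2 * (v + 1) ^ 2 - 1)) by
      rw [Real.sqrt_mul (sq_nonneg d₁), Real.sqrt_sq hd1.le]]
    apply Real.sqrt_le_sqrt
    nlinarith
  nlinarith [mul_le_mul_of_nonneg_left hkey hA.le]

/-- `H` is nonincreasing on `(1, ∞)`. -/
theorem stmt_1 : AntitoneOn H (Set.Ioi (1 : ℝ)) := by
  intro d₁ h1 d₂ h2 hle
  simp only [mem_Ioi] at h1 h2
  rw [key h1, key h2]
  apply integral_mono_of_nonneg
  · exact ae_of_all _ fun v => G_nonneg (by linarith) v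
  · exact G_integrable h1
  · rw [Filter.EventuallyLE, ae_restrict_iff' measurableSet_Ioi]
    exact ae_of_all _ fun v hv => G_mono h1 hle hv
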